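/- Let μ^{k} denote the marginal of a probability measure π on (R^d)^N onto the first k coordinates, and suppose π is exchangeable (invariant under coordinate permutations). Then for any exchangeable probability measure π' on (R^d)^N, W₂(π^{k}, π'^{k}) ≤ √(k/N) · W₂(π, π'). Moreover, for product measures, W₂(ν₀^{⊗N}, μ₀^{⊗N}) ≤ √N · W₂(ν₀, μ₀). -/

import Mathlib

open MeasureTheory Real
open scoped ENNReal

/-- The order-`p` Wasserstein distance, defined as an infimum over couplings. -/
noncomputable def wassersteinDist {E : Type*} [NormedAddCommGroup E] [MeasurableSpace E]
    (p : ℝ) (μ ν : Measure E) : ℝ :=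
  sInf {r : ℝ | ∃ pl : Measure (E × E), IsProbabilityMeasure pl ∧
    pl.map Prod.fst = μ ∧ pl.map Prod.snd = ν ∧
    r = (∫ z, ‖z.1 - z.2‖ ^ p ∂pl) ^ (1 / p)}


/-- `PiLp` is a type synonym for the Pi type; give it the product measurable structure. -/
instance piLpMeasurableSpace {ι : Type*} {E : ι → Type*} [∀ i, MeasurableSpace (E i)] :
    MeasurableSpace (PiLp 2 E) := MeasurableSpace.comap WithLp.ofLp MeasurableSpace.pi

namespace Stmt17Aux

set_option linter.unusedSectionVars false

lemma measurable_ofLp' {n : ℕ} {A : Type*} [MeasurableSpace A] :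
    Measurable (WithLp.ofLp : PiLp 2 (fun _ : Fin n => A) → (Fin n → A)) :=
  WithLp.measurable_ofLp 2 _

lemma measurable_toLp' {n : ℕ} {A : Type*} [MeasurableSpace A] :
    Measurable (WithLp.toLp 2 : (Fin n → A) → PiLp 2 (fun _ : Fin n => A)) :=
  WithLp.measurable_toLp 2 _

lemma map_eval_pi {ι : Type*} [Fintype ι] [DecidableEq ι] {α : ι → Type*}
    [∀ i, MeasurableSpace (α i)] (μ : ∀ i, Measure (α i)) [∀ i, IsProbabilityMeasure (μ i)]
    (i : ι) : (Measure.pi μ).map (Function.eval i) = μ i := by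
  ext s hs
  rw [Measure.map_apply (measurable_pi_apply i) hs, Set.eval_preimage, Measure.pi_pi]
  rw [Fintype.prod_eq_single i (fun j hj => by simp [Function.update, hj])]
  simp

lemma map_finset_sum {α β ι : Type*} [MeasurableSpace α] [MeasurableSpace β]
    (s : Finset ι) (μ : ι → Measure α) {f : α → β} (hf : Measurable f) :
    (∑ i ∈ s, μ i).map f = ∑ i ∈ s, (μ i).map f := by
  ext t ht
  rw [Measure.map_apply hf ht, Measure.finset_sum_apply, Measure.finset_sum_apply]
  exact Finset.sum_congr rfl fun i _ => (Measure.map_apply hf ht).symm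

lemma sum_perm_eval {n : ℕ} (f : Fin n → ℝ≥0∞) (j j' : Fin n) :
    ∑ σ : Equiv.Perm (Fin n), f (σ j) = ∑ σ : Equiv.Perm (Fin n), f (σ j') := by
  rw [← Fintype.sum_bijective (Equiv.mulRight (Equiv.swap j j'))
    (Equiv.bijective _) _ _ (fun σ => rfl)]
  simp [Equiv.Perm.mul_apply]

lemma sum_perm_total {n : ℕ} (f : Fin n → ℝ≥0∞) (j : Fin n) :
    (n : ℝ≥0∞) * ∑ σ : Equiv.Perm (Fin n), f (σ j) =
      (n.factorial : ℝ≥0∞) * ∑ i, f i := by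
  have h1 : ∑ j' : Fin n, ∑ σ : Equiv.Perm (Fin n), f (σ j') =
      ∑ σ : Equiv.Perm (Fin n), ∑ i, f i := by
    rw [Finset.sum_comm]
    exact Finset.sum_congr rfl fun σ _ => Equiv.sum_comp σ f
  have h2 : ∀ j' : Fin n, ∑ σ : Equiv.Perm (Fin n), f (σ j') =
      ∑ σ : Equiv.Perm (Fin n), f (σ j) := fun j' => sum_perm_eval f j' j
  simp only [h2, Finset.sum_const, Finset.card_univ, Fintype.card_fin, Fintype.card_perm,
    smul_eq_mul] at h1
  simpa using h1

variable {A : Type*} [NormedAddCommGroup A] [MeasurableSpace A] [BorelSpace A]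
  [SecondCountableTopology A]

def ofLp2 {n : ℕ} (z : (PiLp 2 fun _ : Fin n => A) × (PiLp 2 fun _ : Fin n => A)) :
    (Fin n → A) × (Fin n → A) := (WithLp.ofLp z.1, WithLp.ofLp z.2)

lemma measurable_ofLp2 {n : ℕ} : Measurable (ofLp2 (A := A) (n := n)) :=
  (measurable_ofLp'.comp measurable_fst).prod (measurable_ofLp'.comp measurable_snd)

noncomputable def cost (pl : Measure (A × A)) : ℝ≥0∞ :=
  ∫⁻ z, ENNReal.ofReal (‖z.1 - z.2‖ ^ 2) ∂pl

lemma cost_meas : Measurable (fun z : A × A => ENNReal.ofReal (‖z.1 - z.2‖ ^ 2)) :=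
  (ENNReal.continuous_ofReal.comp ((continuous_fst.sub continuous_snd).norm.pow 2)).measurable

lemma integral_eq (pl : Measure (A × A)) :
    (∫ z : A × A, ‖z.1 - z.2‖ ^ (2:ℝ) ∂pl) = (cost pl).toReal := by
  have h2 : ∀ z : A × A, ‖z.1 - z.2‖ ^ (2:ℝ) = ‖z.1 - z.2‖ ^ 2 := fun z => by
    rw [show (2:ℝ) = ((2:ℕ):ℝ) by norm_num, Real.rpow_natCast]
  simp only [h2]
  rw [integral_eq_lintegral_of_nonneg_ae (Filter.Eventually.of_forall fun z => by positivity)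
    (by fun_prop : Continuous fun z : A × A => ‖z.1 - z.2‖ ^ 2).aestronglyMeasurable]
  rfl

def WSet (μ ν : Measure A) : Set ℝ :=
  {r : ℝ | ∃ pl : Measure (A × A), IsProbabilityMeasure pl ∧
    pl.map Prod.fst = μ ∧ pl.map Prod.snd = ν ∧
    r = ((cost pl).toReal) ^ (1 / (2:ℝ))}

lemma wd_eq (μ ν : Measure A) : wassersteinDist 2 μ ν = sInf (WSet μ ν) := by
  unfold wassersteinDist WSet
  congr 1
  ext r
  constructor <;> rintro ⟨pl, h1, h2, h3, h4⟩
  · exact ⟨pl, h1, h2, h3, by rw [h4, integral_eq]⟩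
  · exact ⟨pl, h1, h2, h3, by rw [h4, integral_eq]⟩

lemma WSet_nonneg {μ ν : Measure A} : ∀ r ∈ WSet μ ν, (0:ℝ) ≤ r := by
  rintro r ⟨pl, _, _, _, rfl⟩
  exact Real.rpow_nonneg ENNReal.toReal_nonneg _

lemma WSet_bddBelow (μ ν : Measure A) : BddBelow (WSet μ ν) :=
  ⟨0, fun r hr => WSet_nonneg r hr⟩

lemma WSet_nonempty (μ ν : Measure A) [IsProbabilityMeasure μ] [IsProbabilityMeasure ν] :
    (WSet μ ν).Nonempty := by
  refine ⟨_, μ.prod ν, inferInstance, ?_, ?_, rfl⟩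
  · simp [Measure.map_fst_prod]
  · simp [Measure.map_snd_prod]

lemma wd_le {μ ν : Measure A} (pl : Measure (A × A)) (h1 : IsProbabilityMeasure pl)
    (h2 : pl.map Prod.fst = μ) (h3 : pl.map Prod.snd = ν) :
    wassersteinDist 2 μ ν ≤ ((cost pl).toReal) ^ (1 / (2:ℝ)) := by
  rw [wd_eq]
  exact csInf_le (WSet_bddBelow μ ν) ⟨pl, h1, h2, h3, rfl⟩

lemma le_mul_csInf {S : Set ℝ} (hne : S.Nonempty) {a c : ℝ} (hc : 0 ≤ c)
    (h : ∀ r ∈ S, a ≤ c * r) : a ≤ c * sInf S := by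
  rcases hc.eq_or_lt with hc0 | hc0
  · obtain ⟨r, hr⟩ := hne
    have := h r hr
    rw [← hc0] at this ⊢
    simpa using this
  · rw [← div_le_iff₀' hc0]
    exact le_csInf hne fun r hr => (div_le_iff₀' hc0).2 (h r hr)

lemma le_mul_wd (μ ν : Measure A) [IsProbabilityMeasure μ] [IsProbabilityMeasure ν]
    {a c : ℝ} (hc : 0 ≤ c)
    (h : ∀ pl : Measure (A × A), IsProbabilityMeasure pl → pl.map Prod.fst = μ →
      pl.map Prod.snd = ν → a ≤ c * ((cost pl).toReal) ^ (1 / (2:ℝ))) :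
    a ≤ c * wassersteinDist 2 μ ν := by
  rw [wd_eq]
  refine le_mul_csInf (WSet_nonempty μ ν) hc ?_
  rintro r ⟨pl, h1, h2, h3, rfl⟩
  exact h pl h1 h2 h3

lemma norm_sq_pilp {n : ℕ} (x y : PiLp 2 (fun _ : Fin n => A)) :
    ENNReal.ofReal (‖x - y‖ ^ 2) = ∑ i : Fin n, ENNReal.ofReal (‖x i - y i‖ ^ 2) := by
  rw [PiLp.norm_sq_eq_of_L2, ENNReal.ofReal_sum_of_nonneg (fun i _ => by positivity)]
  rfl

lemma norm_sup_le_l2 {k : ℕ} (w : PiLp 2 (fun _ : Fin k => A)) :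
    ‖(WithLp.equiv 2 (∀ _ : Fin k, A) w)‖ ≤ ‖w‖ := by
  rw [pi_norm_le_iff_of_nonneg (norm_nonneg w)]
  intro i
  have h2 : ‖w i‖ ^ 2 ≤ ‖w‖ ^ 2 := by
    rw [PiLp.norm_sq_eq_of_L2]
    exact Finset.single_le_sum (f := fun j => ‖w j‖ ^ 2) (fun j _ => by positivity)
      (Finset.mem_univ i)
  calc ‖(WithLp.equiv 2 (∀ _ : Fin k, A) w) i‖ = Real.sqrt (‖w i‖ ^ 2) :=
        (Real.sqrt_sq (norm_nonneg _)).symm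
    _ ≤ Real.sqrt (‖w‖ ^ 2) := Real.sqrt_le_sqrt h2
    _ = ‖w‖ := Real.sqrt_sq (norm_nonneg _)

lemma cost_sup_le_l2 {k : ℕ}
    (ρ : Measure ((PiLp 2 fun _ : Fin k => A) × (PiLp 2 fun _ : Fin k => A))) :
    @cost (∀ _ : Fin k, A) _ _ (ρ.map ofLp2) ≤ cost ρ := by
  simp only [cost]
  rw [lintegral_map cost_meas measurable_ofLp2]
  refine lintegral_mono fun z => ?_
  apply ENNReal.ofReal_le_ofReal
  exact pow_le_pow_left₀ (norm_nonneg _) (norm_sup_le_l2 (A := A) (z.1 - z.2)) 2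

lemma cost_l2_le_sup {k : ℕ}
    (ρ : Measure ((PiLp 2 fun _ : Fin k => A) × (PiLp 2 fun _ : Fin k => A))) :
    cost ρ ≤ (k : ℝ≥0∞) * @cost (∀ _ : Fin k, A) _ _ (ρ.map ofLp2) := by
  haveI : BorelSpace (∀ _ : Fin k, A) := Pi.borelSpace
  haveI : SecondCountableTopology (∀ _ : Fin k, A) := inferInstance
  set F : (∀ _ : Fin k, A) × (∀ _ : Fin k, A) → ℝ≥0∞ :=
    fun z => ENNReal.ofReal (‖z.1 - z.2‖ ^ 2) with hF
  have hmeas : Measurable F :=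
    (ENNReal.continuous_ofReal.comp
      ((continuous_fst.sub continuous_snd).norm.pow 2)).measurable
  have step1 : cost ρ = ∫⁻ z, ∑ i : Fin k, ENNReal.ofReal (‖z.1 i - z.2 i‖ ^ 2) ∂ρ := by
    rw [cost]
    exact lintegral_congr fun z => norm_sq_pilp _ _
  have step2 : (∫⁻ z, ∑ i : Fin k, ENNReal.ofReal (‖z.1 i - z.2 i‖ ^ 2) ∂ρ)
      ≤ ∫⁻ z, (k : ℝ≥0∞) * F (ofLp2 z) ∂ρ := by
    refine lintegral_mono fun z => ?_
    have hb : ∀ i : Fin k, ENNReal.ofReal (‖z.1 i - z.2 i‖ ^ 2) ≤ F (ofLp2 z) := by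
      intro i
      apply ENNReal.ofReal_le_ofReal
      refine pow_le_pow_left₀ (norm_nonneg _) ?_ 2
      exact norm_le_pi_norm ((ofLp2 z).1 - (ofLp2 z).2) i
    calc ∑ i : Fin k, ENNReal.ofReal (‖z.1 i - z.2 i‖ ^ 2)
        ≤ ∑ _i : Fin k, F (ofLp2 z) := Finset.sum_le_sum fun i _ => hb i
      _ = (k : ℝ≥0∞) * F (ofLp2 z) := by simp [Finset.sum_const, nsmul_eq_mul]
  have step3 : (∫⁻ z, (k : ℝ≥0∞) * F (ofLp2 z) ∂ρ)
      = (k : ℝ≥0∞) * @cost (∀ _ : Fin k, A) _ _ (ρ.map ofLp2) := by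
    rw [cost, lintegral_map cost_meas measurable_ofLp2]
    exact lintegral_const_mul _ (hmeas.comp measurable_ofLp2)
  rw [step1]
  exact le_trans step2 (le_of_eq step3)


lemma toReal_rpow_div {k N : ℕ} (hN : 0 < N) (C : ℝ≥0∞) :
    (((k : ℝ≥0∞) * C / (N : ℝ≥0∞)).toReal) ^ (1 / (2:ℝ))
      = Real.sqrt ((k : ℝ) / (N : ℝ)) * ((C.toReal) ^ (1 / (2:ℝ))) := by
  rcases eq_or_ne C ⊤ with hC | hC
  · subst hC
    rcases Nat.eq_zero_or_pos k with hk0 | hk0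
    · subst hk0
      simp [Real.zero_rpow (by norm_num : (1:ℝ)/2 ≠ 0)]
    · have h1 : (k : ℝ≥0∞) * ⊤ = ⊤ :=
        ENNReal.mul_top (by exact_mod_cast Nat.cast_ne_zero.2 hk0.ne')
      have h2 : (⊤ : ℝ≥0∞) / (N : ℝ≥0∞) = ⊤ :=
        ENNReal.top_div_of_ne_top (ENNReal.natCast_ne_top _)
      rw [h1, h2]
      simp [Real.zero_rpow (by norm_num : (1:ℝ)/2 ≠ 0)]
  · have hNne : ((N : ℝ≥0∞)) ≠ 0 := by exact_mod_cast Nat.cast_ne_zero.2 hN.ne'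
    rw [ENNReal.toReal_div, ENNReal.toReal_mul, ENNReal.toReal_natCast, ENNReal.toReal_natCast]
    have h3 : (k : ℝ) * C.toReal / (N : ℝ) = ((k : ℝ) / N) * C.toReal := by ring
    rw [h3, Real.mul_rpow (by positivity) ENNReal.toReal_nonneg,
      ← Real.sqrt_eq_rpow]

lemma pi_coupling (pl : Measure (A × A)) [IsProbabilityMeasure pl] {ν₀ μ₀ : Measure A}
    (h2 : pl.map Prod.fst = ν₀) (h3 : pl.map Prod.snd = μ₀) (n : ℕ) :
    ∃ pln : Measure ((PiLp 2 fun _ : Fin n => A) × (PiLp 2 fun _ : Fin n => A)),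
      IsProbabilityMeasure pln ∧
      pln.map Prod.fst = (Measure.pi fun _ : Fin n => ν₀).map (WithLp.toLp 2) ∧
      pln.map Prod.snd = (Measure.pi fun _ : Fin n => μ₀).map (WithLp.toLp 2) ∧
      cost pln = n * cost pl := by
  haveI : IsProbabilityMeasure ν₀ := h2 ▸ Measure.isProbabilityMeasure_map measurable_fst.aemeasurable
  haveI : IsProbabilityMeasure μ₀ := h3 ▸ Measure.isProbabilityMeasure_map measurable_snd.aemeasurable
  haveI : BorelSpace (PiLp 2 (fun _ : Fin n => A)) := inferInstance
  haveI : SecondCountableTopology (PiLp 2 (fun _ : Fin n => A)) :=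
    inferInstance
  set g : (Fin n → A × A) → (PiLp 2 fun _ : Fin n => A) × (PiLp 2 fun _ : Fin n => A) :=
    fun z => ((WithLp.toLp 2 (fun i => (z i).1) : PiLp 2 fun _ : Fin n => A),
              (WithLp.toLp 2 (fun i => (z i).2) : PiLp 2 fun _ : Fin n => A)) with hg
  have hgm : Measurable g := by
    apply Measurable.prod
    · exact measurable_toLp'.comp
        (measurable_pi_lambda _ fun i => measurable_fst.comp (measurable_pi_apply i))
    · exact measurable_toLp'.comp
        (measurable_pi_lambda _ fun i => measurable_snd.comp (measurable_pi_apply i))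
  refine ⟨(Measure.pi fun _ : Fin n => pl).map g, Measure.isProbabilityMeasure_map hgm.aemeasurable,
    ?_, ?_, ?_⟩
  · rw [Measure.map_map measurable_fst hgm]
    rw [show Prod.fst ∘ g = WithLp.toLp 2 ∘ (fun z : Fin n → A × A => fun i => (z i).1) from rfl,
      ← Measure.map_map measurable_toLp'
        (show Measurable (fun z : Fin n → A × A => fun i => (z i).1) from
          measurable_pi_lambda _ fun i => measurable_fst.comp (measurable_pi_apply i))]
    exact congrArg (Measure.map (WithLp.toLp 2)) (measurePreserving_pi (fun _ : Fin n => pl) (fun _ => ν₀)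
      (fun _ => ⟨measurable_fst, h2⟩)).map_eq
  · rw [Measure.map_map measurable_snd hgm]
    rw [show Prod.snd ∘ g = WithLp.toLp 2 ∘ (fun z : Fin n → A × A => fun i => (z i).2) from rfl,
      ← Measure.map_map measurable_toLp'
        (show Measurable (fun z : Fin n → A × A => fun i => (z i).2) from
          measurable_pi_lambda _ fun i => measurable_snd.comp (measurable_pi_apply i))]
    exact congrArg (Measure.map (WithLp.toLp 2)) (measurePreserving_pi (fun _ : Fin n => pl) (fun _ => μ₀)
      (fun _ => ⟨measurable_snd, h3⟩)).map_eq
  · rw [cost, lintegral_map cost_meas hgm]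
    have : ∀ z : Fin n → A × A, ENNReal.ofReal (‖(g z).1 - (g z).2‖ ^ 2)
        = ∑ i : Fin n, ENNReal.ofReal (‖(z i).1 - (z i).2‖ ^ 2) := by
      intro z
      rw [norm_sq_pilp]
    simp only [this]
    rw [lintegral_finset_sum _ (fun i _ => by exact cost_meas.comp (measurable_pi_apply i))]
    have heval : ∀ i : Fin n, ∫⁻ z, ENNReal.ofReal (‖(z i).1 - (z i).2‖ ^ 2)
        ∂(Measure.pi fun _ : Fin n => pl) = cost pl := by
      intro i
      rw [cost, ← lintegral_map cost_meas (measurable_pi_apply i),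
        map_eval_pi (fun _ : Fin n => pl) i]
    simp only [heval]
    simp [Finset.sum_const, mul_comm]

lemma avg_coupling {N k : ℕ} (hk : k ≤ N) (hN : 0 < N)
    (pl : Measure ((PiLp 2 fun _ : Fin N => A) × (PiLp 2 fun _ : Fin N => A)))
    [IsProbabilityMeasure pl]
    {pr pr' : Measure (PiLp 2 fun _ : Fin N => A)}
    (h2 : pl.map Prod.fst = pr) (h3 : pl.map Prod.snd = pr')
    (hexch : ∀ σ : Equiv.Perm (Fin N),
      pr.map (fun x => (WithLp.toLp 2 (fun i => x (σ i)) : PiLp 2 fun _ : Fin N => A)) = pr)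
    (hexch' : ∀ σ : Equiv.Perm (Fin N),
      pr'.map (fun x => (WithLp.toLp 2 (fun i => x (σ i)) : PiLp 2 fun _ : Fin N => A)) = pr') :
    ∃ plk : Measure ((PiLp 2 fun _ : Fin k => A) × (PiLp 2 fun _ : Fin k => A)),
      IsProbabilityMeasure plk ∧
      plk.map Prod.fst =
        pr.map (fun x => (WithLp.toLp 2 (fun i => x (Fin.castLE hk i)) : PiLp 2 fun _ : Fin k => A)) ∧
      plk.map Prod.snd =
        pr'.map (fun x => (WithLp.toLp 2 (fun i => x (Fin.castLE hk i)) : PiLp 2 fun _ : Fin k => A)) ∧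
      cost plk = (k : ℝ≥0∞) * cost pl / N := by
  classical
  haveI : BorelSpace (PiLp 2 (fun _ : Fin N => A)) := inferInstance
  haveI : SecondCountableTopology (PiLp 2 (fun _ : Fin N => A)) :=
    inferInstance
  haveI : BorelSpace (PiLp 2 (fun _ : Fin k => A)) := inferInstance
  haveI : SecondCountableTopology (PiLp 2 (fun _ : Fin k => A)) :=
    inferInstance
  set T : Equiv.Perm (Fin N) → (PiLp 2 fun _ : Fin N => A) → (PiLp 2 fun _ : Fin N => A) :=
    fun σ x => WithLp.toLp 2 (fun i => x (σ i)) with hT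
  have hTm : ∀ σ, Measurable (T σ) := fun σ =>
    measurable_toLp'.comp (measurable_pi_lambda _ fun i => (measurable_pi_apply (σ i)).comp measurable_ofLp')
  set P : Equiv.Perm (Fin N) →
      (PiLp 2 fun _ : Fin N => A) × (PiLp 2 fun _ : Fin N => A) →
      (PiLp 2 fun _ : Fin N => A) × (PiLp 2 fun _ : Fin N => A) :=
    fun σ z => (T σ z.1, T σ z.2) with hP
  have hPm : ∀ σ, Measurable (P σ) := fun σ =>
    ((hTm σ).comp measurable_fst).prod ((hTm σ).comp measurable_snd)
  set res : (PiLp 2 fun _ : Fin N => A) → (PiLp 2 fun _ : Fin k => A) :=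
    fun x => WithLp.toLp 2 (fun i => x (Fin.castLE hk i)) with hres
  have hresm : Measurable res :=
    measurable_toLp'.comp (measurable_pi_lambda _ fun i => (measurable_pi_apply _).comp measurable_ofLp')
  set R : (PiLp 2 fun _ : Fin N => A) × (PiLp 2 fun _ : Fin N => A) →
      (PiLp 2 fun _ : Fin k => A) × (PiLp 2 fun _ : Fin k => A) :=
    fun z => (res z.1, res z.2) with hR
  have hRm : Measurable R := (hresm.comp measurable_fst).prod (hresm.comp measurable_snd)
  have hfne : ((N.factorial : ℝ≥0∞)) ≠ 0 := by
    exact_mod_cast Nat.cast_ne_zero.2 (Nat.factorial_ne_zero N)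
  have hftop : ((N.factorial : ℝ≥0∞)) ≠ ⊤ := ENNReal.natCast_ne_top _
  set avg : Measure ((PiLp 2 fun _ : Fin N => A) × (PiLp 2 fun _ : Fin N => A)) :=
    ((N.factorial : ℝ≥0∞))⁻¹ • ∑ σ : Equiv.Perm (Fin N), pl.map (P σ) with havg
  haveI hPprob : ∀ σ, IsProbabilityMeasure (pl.map (P σ)) := fun σ =>
    Measure.isProbabilityMeasure_map (hPm σ).aemeasurable
  haveI havgprob : IsProbabilityMeasure avg := by
    constructor
    rw [havg, Measure.smul_apply, Measure.finset_sum_apply]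
    simp only [measure_univ, Finset.sum_const, Finset.card_univ, Fintype.card_perm,
      Fintype.card_fin, smul_eq_mul, nsmul_eq_mul, mul_one]
    exact ENNReal.inv_mul_cancel hfne hftop
  have havgfst : avg.map Prod.fst = pr := by
    rw [havg, Measure.map_smul, map_finset_sum _ _ measurable_fst]
    have : ∀ σ : Equiv.Perm (Fin N), (pl.map (P σ)).map Prod.fst = pr := by
      intro σ
      rw [Measure.map_map measurable_fst (hPm σ)]
      have : (Prod.fst ∘ P σ) = (T σ) ∘ Prod.fst := rfl
      rw [this, ← Measure.map_map (hTm σ) measurable_fst, h2]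
      exact hexch σ
    simp only [this, Finset.sum_const, Finset.card_univ, Fintype.card_perm, Fintype.card_fin]
    rw [← Nat.cast_smul_eq_nsmul ℝ≥0∞, smul_smul, ENNReal.inv_mul_cancel hfne hftop, one_smul]
  have havgsnd : avg.map Prod.snd = pr' := by
    rw [havg, Measure.map_smul, map_finset_sum _ _ measurable_snd]
    have : ∀ σ : Equiv.Perm (Fin N), (pl.map (P σ)).map Prod.snd = pr' := by
      intro σ
      rw [Measure.map_map measurable_snd (hPm σ)]
      have : (Prod.snd ∘ P σ) = (T σ) ∘ Prod.snd := rfl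
      rw [this, ← Measure.map_map (hTm σ) measurable_snd, h3]
      exact hexch' σ
    simp only [this, Finset.sum_const, Finset.card_univ, Fintype.card_perm, Fintype.card_fin]
    rw [← Nat.cast_smul_eq_nsmul ℝ≥0∞, smul_smul, ENNReal.inv_mul_cancel hfne hftop, one_smul]
  refine ⟨avg.map R, Measure.isProbabilityMeasure_map hRm.aemeasurable, ?_, ?_, ?_⟩
  · rw [Measure.map_map measurable_fst hRm]
    have : (Prod.fst ∘ R) = res ∘ Prod.fst := rfl
    rw [this, ← Measure.map_map hresm measurable_fst, havgfst]
  · rw [Measure.map_map measurable_snd hRm]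
    have : (Prod.snd ∘ R) = res ∘ Prod.snd := rfl
    rw [this, ← Measure.map_map hresm measurable_snd, havgsnd]
  · set c : Fin N → ℝ≥0∞ :=
      fun j => ∫⁻ z, ENNReal.ofReal (‖z.1 j - z.2 j‖ ^ 2) ∂pl with hc
    have hcm : ∀ j : Fin N, Measurable
        (fun z : (PiLp 2 fun _ : Fin N => A) × (PiLp 2 fun _ : Fin N => A) =>
          ENNReal.ofReal (‖z.1 j - z.2 j‖ ^ 2)) := fun j =>
      ((((measurable_pi_apply j).comp (measurable_ofLp'.comp measurable_fst)).sub
        ((measurable_pi_apply j).comp (measurable_ofLp'.comp measurable_snd))).norm.pow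
          measurable_const).ennreal_ofReal
    have hCsum : cost pl = ∑ j : Fin N, c j := by
      rw [cost]
      have : ∀ z : (PiLp 2 fun _ : Fin N => A) × (PiLp 2 fun _ : Fin N => A),
          ENNReal.ofReal (‖z.1 - z.2‖ ^ 2)
            = ∑ j : Fin N, ENNReal.ofReal (‖z.1 j - z.2 j‖ ^ 2) := fun z => norm_sq_pilp _ _
      simp only [this]
      rw [lintegral_finset_sum _ (fun j _ => hcm j)]
    set j₀ : Fin N := ⟨0, hN⟩ with hj₀
    set S : ℝ≥0∞ := ∑ σ : Equiv.Perm (Fin N), c (σ j₀) with hS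
    have hperm : ∀ σ : Equiv.Perm (Fin N),
        ∫⁻ z, ENNReal.ofReal (‖(R z).1 - (R z).2‖ ^ 2) ∂(pl.map (P σ))
          = ∑ i : Fin k, c (σ (Fin.castLE hk i)) := by
      intro σ
      rw [lintegral_map (by exact cost_meas.comp hRm) (hPm σ)]
      have : ∀ z : (PiLp 2 fun _ : Fin N => A) × (PiLp 2 fun _ : Fin N => A),
            ENNReal.ofReal (‖(R (P σ z)).1 - (R (P σ z)).2‖ ^ 2)
              = ∑ i : Fin k, ENNReal.ofReal (‖z.1 (σ (Fin.castLE hk i))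
                  - z.2 (σ (Fin.castLE hk i))‖ ^ 2) := by
        intro z
        rw [norm_sq_pilp]
      simp only [this]
      rw [lintegral_finset_sum _ (fun i _ => hcm (σ (Fin.castLE hk i)))]
    have hcost : cost (avg.map R) = ((N.factorial : ℝ≥0∞))⁻¹ * ((k : ℝ≥0∞) * S) := by
      rw [cost, lintegral_map cost_meas hRm, havg, lintegral_smul_measure,
        lintegral_finset_sum_measure]
      congr 1
      calc ∑ σ : Equiv.Perm (Fin N),
            ∫⁻ z, ENNReal.ofReal (‖(R z).1 - (R z).2‖ ^ 2) ∂(pl.map (P σ))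
          = ∑ σ : Equiv.Perm (Fin N), ∑ i : Fin k, c (σ (Fin.castLE hk i)) :=
            Finset.sum_congr rfl fun σ _ => hperm σ
        _ = ∑ i : Fin k, ∑ σ : Equiv.Perm (Fin N), c (σ (Fin.castLE hk i)) :=
            Finset.sum_comm
        _ = ∑ _i : Fin k, S :=
            Finset.sum_congr rfl fun i _ => sum_perm_eval c _ j₀
        _ = (k : ℝ≥0∞) * S := by
            simp [Finset.sum_const, Finset.card_univ, mul_comm]
    have htot : (N : ℝ≥0∞) * S = (N.factorial : ℝ≥0∞) * cost pl := by
      rw [hS, hCsum]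
      exact sum_perm_total c j₀
    have hNne : ((N : ℝ≥0∞)) ≠ 0 := by exact_mod_cast Nat.cast_ne_zero.2 hN.ne'
    have hNtop : ((N : ℝ≥0∞)) ≠ ⊤ := ENNReal.natCast_ne_top _
    have hSval : S = (N : ℝ≥0∞)⁻¹ * ((N.factorial : ℝ≥0∞) * cost pl) := by
      rw [← htot, ← mul_assoc, ENNReal.inv_mul_cancel hNne hNtop, one_mul]
    rw [hcost, hSval]
    rw [div_eq_mul_inv]
    calc ((N.factorial : ℝ≥0∞))⁻¹ * ((k : ℝ≥0∞) *
          ((N : ℝ≥0∞)⁻¹ * ((N.factorial : ℝ≥0∞) * cost pl)))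
        = (k : ℝ≥0∞) * cost pl * (N : ℝ≥0∞)⁻¹ *
            (((N.factorial : ℝ≥0∞))⁻¹ * (N.factorial : ℝ≥0∞)) := by
          ring
      _ = (k : ℝ≥0∞) * cost pl * (N : ℝ≥0∞)⁻¹ := by
          rw [ENNReal.inv_mul_cancel hfne hftop, mul_one]

end Stmt17Aux

open Stmt17Aux in
theorem stmt17 {d N k : ℕ} (hk : k ≤ N) (hN : 0 < N)
    (pr pr' : Measure (PiLp 2 (fun _ : Fin N => EuclideanSpace ℝ (Fin d))))
    [IsProbabilityMeasure pr] [IsProbabilityMeasure pr']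
    -- exchangeability
    (hexch : ∀ σ : Equiv.Perm (Fin N),
      Measure.map (fun x : PiLp 2 (fun _ : Fin N => EuclideanSpace ℝ (Fin d)) =>
        (WithLp.toLp 2 (fun i => x (σ i)) : PiLp 2 (fun _ : Fin N => EuclideanSpace ℝ (Fin d)))) pr = pr)
    (hexch' : ∀ σ : Equiv.Perm (Fin N),
      Measure.map (fun x : PiLp 2 (fun _ : Fin N => EuclideanSpace ℝ (Fin d)) =>
        (WithLp.toLp 2 (fun i => x (σ i)) : PiLp 2 (fun _ : Fin N => EuclideanSpace ℝ (Fin d)))) pr' = pr')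
    (ν₀ μ₀ : Measure (EuclideanSpace ℝ (Fin d)))
    [IsProbabilityMeasure ν₀] [IsProbabilityMeasure μ₀] :
    wassersteinDist 2
        (Measure.map (fun x : PiLp 2 (fun _ : Fin N => EuclideanSpace ℝ (Fin d)) =>
          (WithLp.toLp 2 (fun i => x (Fin.castLE hk i)) : PiLp 2 (fun _ : Fin k => EuclideanSpace ℝ (Fin d)))) pr)
        (Measure.map (fun x : PiLp 2 (fun _ : Fin N => EuclideanSpace ℝ (Fin d)) =>
          (WithLp.toLp 2 (fun i => x (Fin.castLE hk i)) : PiLp 2 (fun _ : Fin k => EuclideanSpace ℝ (Fin d)))) pr')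
      ≤ Real.sqrt ((k : ℝ) / N) * wassersteinDist 2 pr pr' ∧
    wassersteinDist 2
        (Measure.map (WithLp.toLp 2) (Measure.pi (fun _ : Fin N => ν₀)) :
          Measure (PiLp 2 (fun _ : Fin N => EuclideanSpace ℝ (Fin d))))
        (Measure.map (WithLp.toLp 2) (Measure.pi (fun _ : Fin N => μ₀)))
      ≤ Real.sqrt (N : ℝ) * wassersteinDist 2 ν₀ μ₀ := by
  set A := EuclideanSpace ℝ (Fin d) with hA
  haveI : BorelSpace A := show BorelSpace (EuclideanSpace ℝ (Fin d)) from inferInstance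
  haveI : BorelSpace (PiLp 2 (fun _ : Fin N => A)) := inferInstance
  haveI : SecondCountableTopology (PiLp 2 (fun _ : Fin N => A)) :=
    inferInstance
  haveI : BorelSpace (PiLp 2 (fun _ : Fin k => A)) := inferInstance
  haveI : SecondCountableTopology (PiLp 2 (fun _ : Fin k => A)) :=
    inferInstance
  have hresm : Measurable (fun x : PiLp 2 (fun _ : Fin N => A) =>
      (WithLp.toLp 2 (fun i => x (Fin.castLE hk i)) : PiLp 2 (fun _ : Fin k => A))) :=
    measurable_toLp'.comp (measurable_pi_lambda _ fun i => (measurable_pi_apply _).comp measurable_ofLp')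
  haveI : IsProbabilityMeasure (pr.map (fun x : PiLp 2 (fun _ : Fin N => A) =>
      (WithLp.toLp 2 (fun i => x (Fin.castLE hk i)) : PiLp 2 (fun _ : Fin k => A)))) :=
    Measure.isProbabilityMeasure_map hresm.aemeasurable
  haveI : IsProbabilityMeasure (pr'.map (fun x : PiLp 2 (fun _ : Fin N => A) =>
      (WithLp.toLp 2 (fun i => x (Fin.castLE hk i)) : PiLp 2 (fun _ : Fin k => A)))) :=
    Measure.isProbabilityMeasure_map hresm.aemeasurable
  constructor
  · refine le_mul_wd pr pr' (Real.sqrt_nonneg _) ?_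
    intro pl hpl h2 h3
    haveI := hpl
    obtain ⟨plk, hprob, hfst, hsnd, hcost⟩ :=
      avg_coupling hk hN pl h2 h3 hexch hexch'
    refine le_trans (wd_le _ hprob hfst hsnd) ?_
    rw [hcost]
    exact (toReal_rpow_div hN _).le
  · refine le_mul_wd ν₀ μ₀ (Real.sqrt_nonneg _) ?_
    intro pl hpl h2 h3
    haveI := hpl
    obtain ⟨pln, hprob, hfst, hsnd, hcost⟩ := pi_coupling pl h2 h3 N
    refine le_trans (wd_le _ hprob hfst hsnd) ?_
    rw [hcost]
    have hval : (((N : ℝ≥0∞) * cost pl).toReal) ^ (1 / (2:ℝ))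
        = Real.sqrt (N : ℝ) * ((cost pl).toReal) ^ (1 / (2:ℝ)) := by
      have h1 : (N : ℝ≥0∞) * cost pl = (N : ℝ≥0∞) * cost pl / ((1:ℕ) : ℝ≥0∞) := by simp
      rw [h1, toReal_rpow_div one_pos]
      norm_num
    exact hval.le
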